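/- For every positive integer n, the number of one-dimensional subspaces ℂ·ψ of ℂ² (ψ nonzero) with χ(ψ^{⊗n}) < χ_n is at most n·C(S_n, χ_n − 1), where S_n is the number of distinct one-dimensional subspaces of ℂ^{𝔽₂ⁿ} spanned by stabilizer state vectors and C(·,·) denotes the binomial coefficient. Similarly, the number of one-dimensional subspaces ℂ·ψ of ℂ² with χℝ(ψ^{⊗n}) < χ_nℝ is at most n·C(S_nℝ, χ_nℝ − 1), where S_nℝ is the number of distinct one-dimensional subspaces of ℂ^{𝔽₂ⁿ} spanned by real stabilizer state vectors. -/

import Mathlib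

open scoped BigOperators Classical

noncomputable section

namespace StabPaper

/-- The space `𝔽₂ⁿ` of length-`n` bitstrings. -/
abbrev F2 (n : ℕ) := Fin n → ZMod 2

/-- `A ⊆ 𝔽₂ⁿ` is a (nonempty) affine linear subspace. -/
def IsAffineSubspace {n : ℕ} (A : Set (F2 n)) : Prop :=
  A.Nonempty ∧ ∀ x ∈ A, ∀ y ∈ A, ∀ z ∈ A, x + y + z ∈ A

/-- `l : 𝔽₂ⁿ → 𝔽₂` is a linear form. -/
def IsLinearForm {n : ℕ} (l : F2 n → ZMod 2) : Prop :=
  ∀ x y, l (x + y) = l x + l y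

/-- `q : 𝔽₂ⁿ → 𝔽₂` is a quadratic form (polynomial of degree at most 2
with vanishing constant term). -/
def IsQuadraticForm {n : ℕ} (q : F2 n → ZMod 2) : Prop :=
  q 0 = 0 ∧ ∀ x y z, q (x + y + z) = q (x + y) + q (x + z) + q (y + z) + q x + q y + q z

/-- A stabilizer state vector on `n` qubits. -/
def IsStabilizerState {n : ℕ} (σ : F2 n → ℂ) : Prop :=
  ∃ (A : Set (F2 n)) (l q : F2 n → ZMod 2),
    IsAffineSubspace A ∧ IsLinearForm l ∧ IsQuadraticForm q ∧
    ∀ x, σ x = if x ∈ A then Complex.I ^ (l x).val * (-1 : ℂ) ^ (q x).val else 0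

/-- A real stabilizer state vector on `n` qubits (the case `l = 0`). -/
def IsRealStabilizerState {n : ℕ} (σ : F2 n → ℂ) : Prop :=
  ∃ (A : Set (F2 n)) (q : F2 n → ZMod 2),
    IsAffineSubspace A ∧ IsQuadraticForm q ∧
    ∀ x, σ x = if x ∈ A then (-1 : ℂ) ^ (q x).val else 0

/-- The stabilizer rank: the least `r` such that `ψ` is a `ℂ`-linear combination of
`r` stabilizer state vectors. -/
def stabRank {n : ℕ} (ψ : F2 n → ℂ) : ℕ :=
  sInf {r : ℕ | ∃ (c : Fin r → ℂ) (σ : Fin r → (F2 n → ℂ)),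
    (∀ i, IsStabilizerState (σ i)) ∧ ψ = ∑ i, c i • σ i}

/-- The real stabilizer rank: the least `r` such that `ψ` is a `ℂ`-linear combination of
`r` real stabilizer state vectors. -/
def realStabRank {n : ℕ} (ψ : F2 n → ℂ) : ℕ :=
  sInf {r : ℕ | ∃ (c : Fin r → ℂ) (σ : Fin r → (F2 n → ℂ)),
    (∀ i, IsRealStabilizerState (σ i)) ∧ ψ = ∑ i, c i • σ i}

/-- The `n`-fold tensor power of a one-qubit vector `ψ : ℂ²`. -/
def tensorPow (ψ : ZMod 2 → ℂ) (n : ℕ) : F2 n → ℂ := fun x => ∏ i, ψ (x i)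

/-- The Euclidean norm on `ℂ^{𝔽₂ⁿ}`. -/
def l2norm {n : ℕ} (φ : F2 n → ℂ) : ℝ := Real.sqrt (∑ x, ‖φ x‖ ^ 2)

/-- The δ-approximate stabilizer rank. -/
def approxStabRank {n : ℕ} (δ : ℝ) (ψ : F2 n → ℂ) : ℕ :=
  sInf {r : ℕ | ∃ φ : F2 n → ℂ, φ ≠ 0 ∧
    l2norm (fun x => ((l2norm φ : ℝ) : ℂ)⁻¹ * φ x - ((l2norm ψ : ℝ) : ℂ)⁻¹ * ψ x) < δ ∧
    stabRank φ = r}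

/-- The one-qubit vector `a·e₀ + b·e₁ ∈ ℂ²`. -/
def qubit (a b : ℂ) : ZMod 2 → ℂ := fun x => if x = 0 then a else b

/-- A nonzero `ψ ∈ ℂ²` is a one-qubit stabilizer state vector iff it is proportional to
one of `e₀, e₁, e₀+e₁, e₀−e₁, e₀+i·e₁, e₀−i·e₁`. -/
def IsQubitStabVec (ψ : ZMod 2 → ℂ) : Prop :=
  ∃ c : ℂ, c ≠ 0 ∧ (ψ = c • qubit 1 0 ∨ ψ = c • qubit 0 1 ∨ ψ = c • qubit 1 1 ∨
    ψ = c • qubit 1 (-1) ∨ ψ = c • qubit 1 Complex.I ∨ ψ = c • qubit 1 (-Complex.I))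

/-- The `n`-th generic stabilizer rank `χ_n`. -/
def genStabRank (n : ℕ) : ℕ :=
  sSup {r : ℕ | ∃ ψ : ZMod 2 → ℂ, ψ ≠ 0 ∧ stabRank (tensorPow ψ n) = r}

/-- The `n`-th generic real stabilizer rank `χ_nℝ`. -/
def genRealStabRank (n : ℕ) : ℕ :=
  sSup {r : ℕ | ∃ ψ : ZMod 2 → ℂ, ψ ≠ 0 ∧ realStabRank (tensorPow ψ n) = r}


/-- The set of one-dimensional subspaces of `ℂ^{𝔽₂ⁿ}` spanned by stabilizer state
vectors (projective stabilizer states). -/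
def stabLines (n : ℕ) : Set (Submodule ℂ (F2 n → ℂ)) :=
  {L | ∃ σ : F2 n → ℂ, IsStabilizerState σ ∧ L = Submodule.span ℂ {σ}}

/-- The set of one-dimensional subspaces of `ℂ^{𝔽₂ⁿ}` spanned by real stabilizer state
vectors (projective real stabilizer states). -/
def realStabLines (n : ℕ) : Set (Submodule ℂ (F2 n → ℂ)) :=
  {L | ∃ σ : F2 n → ℂ, IsRealStabilizerState σ ∧ L = Submodule.span ℂ {σ}}

def delta {n : ℕ} (x : F2 n) : F2 n → ℂ := fun y => if y = x then 1 else 0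

def pRank {n : ℕ} (P : (F2 n → ℂ) → Prop) (ψ : F2 n → ℂ) : ℕ :=
  sInf {r : ℕ | ∃ (c : Fin r → ℂ) (σ : Fin r → (F2 n → ℂ)),
    (∀ i, P (σ i)) ∧ ψ = ∑ i, c i • σ i}

lemma decomp_delta {n : ℕ} (ψ : F2 n → ℂ) : ψ = ∑ x, ψ x • delta x := by
  funext y
  have : (∑ x, ψ x • delta x) y = ∑ x, ψ x * (if y = x then 1 else 0) := by
    simp [delta]
  rw [this, Finset.sum_eq_single y]
  · simp
  · intro b _ hby
    rw [if_neg (fun h => hby h.symm), mul_zero]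
  · simp

lemma card_mem_pRankSet {n : ℕ} (P : (F2 n → ℂ) → Prop) (hδ : ∀ x, P (delta x))
    (ψ : F2 n → ℂ) :
    Fintype.card (F2 n) ∈ {r : ℕ | ∃ (c : Fin r → ℂ) (σ : Fin r → (F2 n → ℂ)),
      (∀ i, P (σ i)) ∧ ψ = ∑ i, c i • σ i} := by
  set e := (Fintype.equivFin (F2 n)).symm
  exact ⟨fun i => ψ (e i), fun i => delta (e i), fun i => hδ _,
    (decomp_delta ψ).trans (Equiv.sum_comp e (fun x => ψ x • delta x)).symm⟩

lemma pRank_le_card {n : ℕ} (P : (F2 n → ℂ) → Prop) (hδ : ∀ x, P (delta x))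
    (ψ : F2 n → ℂ) : pRank P ψ ≤ Fintype.card (F2 n) :=
  Nat.sInf_le (card_mem_pRankSet P hδ ψ)

lemma pRank_le_of_mem_span {n : ℕ} (P : (F2 n → ℂ) → Prop) (ψ : F2 n → ℂ)
    (s : Finset (F2 n → ℂ)) (hP : ∀ σ ∈ s, P σ)
    (h : ψ ∈ Submodule.span ℂ (s : Set (F2 n → ℂ))) : pRank P ψ ≤ s.card := by
  obtain ⟨f, -, hf⟩ := Submodule.mem_span_finset.mp h
  set e := s.equivFin
  refine Nat.sInf_le ⟨fun i => f (e.symm i), fun i => (e.symm i : F2 n → ℂ),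
    fun i => hP _ (e.symm i).2, ?_⟩
  rw [← hf, ← Finset.sum_attach s (fun a => f a • a)]
  exact (Equiv.sum_comp e.symm (fun a : s => f (a : F2 n → ℂ) • (a : F2 n → ℂ))).symm

lemma exists_span_of_pRank {n : ℕ} (P : (F2 n → ℂ) → Prop) (hδ : ∀ x, P (delta x))
    (ψ : F2 n → ℂ) :
    ∃ s : Finset (F2 n → ℂ), (∀ σ ∈ s, P σ) ∧ s.card ≤ pRank P ψ ∧
      ψ ∈ Submodule.span ℂ (s : Set (F2 n → ℂ)) := by
  have hmem := Nat.sInf_mem ⟨_, card_mem_pRankSet P hδ ψ⟩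
  obtain ⟨c, σ, hσ, hsum⟩ := hmem
  refine ⟨Finset.univ.image σ, ?_, ?_, ?_⟩
  · intro τ hτ; obtain ⟨i, _, rfl⟩ := Finset.mem_image.mp hτ; exact hσ i
  · exact (Finset.card_image_le).trans (le_of_eq (by simp [pRank]))
  · have : (∑ i, c i • σ i) ∈ Submodule.span ℂ ((Finset.univ.image σ : Finset _) : Set (F2 n → ℂ)) :=
      Submodule.sum_mem _ fun i _ => Submodule.smul_mem _ _
        (Submodule.subset_span (by simp [Finset.mem_image]))
    rwa [← hsum] at this



def wt {n : ℕ} (x : F2 n) : ℕ := ∑ i, (x i).val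

lemma zmod2_cases (z : ZMod 2) : z = 0 ∨ z = 1 := by revert z; decide
lemma zmod2_val_le (z : ZMod 2) : z.val ≤ 1 := by revert z; decide
lemma zmod2_val_one_iff (z : ZMod 2) : z.val = 1 ↔ z = 1 := by revert z; decide
lemma zmod2_val_zero_iff (z : ZMod 2) : z.val = 0 ↔ z = 0 := by revert z; decide

lemma zmod2_val_one : (1 : ZMod 2).val = 1 := by decide

lemma wt_le {n : ℕ} (x : F2 n) : wt x ≤ n := by
  calc wt x ≤ ∑ _i : Fin n, 1 := Finset.sum_le_sum fun i _ => zmod2_val_le _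
  _ = n := by simp

lemma wt_ones {n : ℕ} : wt (fun _ => (1 : ZMod 2) : F2 n) = n := by
  simp [wt, zmod2_val_one]

lemma wt_eq_n {n : ℕ} (x : F2 n) (h : wt x = n) : x = fun _ => 1 := by
  by_contra hx
  obtain ⟨i, hi⟩ : ∃ i, x i ≠ 1 := by
    by_contra hc; push_neg at hc; exact hx (funext hc)
  have hlt : wt x < n := by
    have := Finset.sum_lt_sum (s := Finset.univ) (f := fun i => (x i).val)
      (g := fun _ => 1) (fun i _ => zmod2_val_le _)
      ⟨i, Finset.mem_univ i, by
        rcases zmod2_cases (x i) with h0 | h1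
        · simp [h0]
        · exact absurd h1 hi⟩
    simpa [wt] using this
  omega

lemma qubit_eq (ψ : ZMod 2 → ℂ) : ψ = qubit (ψ 0) (ψ 1) := by
  funext x
  rcases zmod2_cases x with h | h <;> simp [h, qubit]

lemma tensorPow_smul (c : ℂ) (ψ : ZMod 2 → ℂ) (n : ℕ) :
    tensorPow (c • ψ) n = c ^ n • tensorPow ψ n := by
  funext x
  simp [tensorPow, Finset.prod_mul_distrib, mul_comm]

lemma qubit_smul (a b : ℂ) (ha : a ≠ 0) : qubit a b = a • qubit 1 (b / a) := by
  funext x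
  rcases zmod2_cases x with h | h
  · simp [h, qubit]
  · simp [h, qubit, mul_div_cancel₀ b ha]

lemma tensorPow_qubit_one (n : ℕ) (t : ℂ) :
    tensorPow (qubit 1 t) n = ∑ x, (t ^ wt x) • delta x := by
  funext y
  have h1 : tensorPow (qubit 1 t) n y = t ^ wt y := by
    rw [tensorPow]
    have : ∀ i : Fin n, qubit 1 t (y i) = t ^ (y i).val := by
      intro i
      rcases zmod2_cases (y i) with h | h <;> simp [h, qubit, zmod2_val_one]
    rw [Finset.prod_congr rfl (fun i _ => this i), Finset.prod_pow_eq_pow_sum]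
    rfl
  have h2 : (∑ x, (t ^ wt x) • delta x) y = t ^ wt y := by
    have : ∀ x : F2 n, ((t ^ wt x) • delta x) y = if y = x then t ^ wt x else 0 := by
      intro x; simp [delta]
    rw [Finset.sum_apply, Finset.sum_congr rfl (fun x _ => this x),
      Finset.sum_ite_eq Finset.univ y]
    simp
  rw [h1, h2]

lemma tensorPow_qubit01 (n : ℕ) :
    tensorPow (qubit 0 1) n = delta (fun _ => 1 : F2 n) := by
  funext y
  by_cases hy : y = fun _ => (1 : ZMod 2)
  · subst hy
    simp [tensorPow, qubit, delta]
  · obtain ⟨i, hi⟩ : ∃ i, y i ≠ 1 := by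
      by_contra hc; push_neg at hc; exact hy (funext hc)
    have h0 : y i = 0 := by rcases zmod2_cases (y i) with h | h; exact h; exact absurd h hi
    rw [tensorPow]
    rw [Finset.prod_eq_zero (Finset.mem_univ i) (by simp [qubit, h0])]
    simp [delta, hy]

lemma exists_dual {n : ℕ} (V : Submodule ℂ (F2 n → ℂ)) (v₀ : F2 n → ℂ) (h : v₀ ∉ V) :
    ∃ f : (F2 n → ℂ) →ₗ[ℂ] ℂ, (∀ v ∈ V, f v = 0) ∧ f v₀ ≠ 0 := by
  have h1 : V.mkQ v₀ ≠ 0 := by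
    simpa [Submodule.Quotient.mk_eq_zero] using h
  obtain ⟨g, hg⟩ : ∃ g : Module.Dual ℂ ((F2 n → ℂ) ⧸ V), g (V.mkQ v₀) ≠ 0 := by
    by_contra hc; push_neg at hc
    exact h1 ((Module.forall_dual_apply_eq_zero_iff ℂ _).mp hc)
  refine ⟨g.comp V.mkQ, fun v hv => ?_, hg⟩
  have : V.mkQ v = 0 := (Submodule.Quotient.mk_eq_zero V).mpr hv
  simp [this]



lemma poly_count {n : ℕ} (hn : 1 ≤ n) (V : Submodule ℂ (F2 n → ℂ)) (ψ₀ : ZMod 2 → ℂ)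
    (h₀ : tensorPow ψ₀ n ∉ V) :
    ∃ Bf : Finset (Submodule ℂ (ZMod 2 → ℂ)), Bf.card ≤ n ∧
      ∀ ψ : ZMod 2 → ℂ, ψ ≠ 0 → tensorPow ψ n ∈ V →
        Submodule.span ℂ {ψ} ∈ Bf := by
  obtain ⟨f, hfV, hf0⟩ := exists_dual V _ h₀
  set q : Polynomial ℂ := ∑ x : F2 n, Polynomial.C (f (delta x)) * Polynomial.X ^ wt x with hq
  have heval : ∀ t : ℂ, q.eval t = f (tensorPow (qubit 1 t) n) := by
    intro t
    rw [tensorPow_qubit_one, map_sum, hq, Polynomial.eval_finset_sum]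
    refine Finset.sum_congr rfl fun x _ => ?_
    rw [Polynomial.eval_mul, Polynomial.eval_C, Polynomial.eval_pow, Polynomial.eval_X,
      map_smul, smul_eq_mul, mul_comm]
  have hdeg : q.natDegree ≤ n := by
    refine Polynomial.natDegree_sum_le_of_forall_le _ _ fun x _ => ?_
    exact (Polynomial.natDegree_C_mul_le _ _).trans (by simp [wt_le x])
  have hcoeff : q.coeff n = f (delta (fun _ => 1 : F2 n)) := by
    rw [hq, Polynomial.finset_sum_coeff]
    rw [Finset.sum_eq_single (fun _ => (1 : ZMod 2) : F2 n)]
    · simp [Polynomial.coeff_C_mul, Polynomial.coeff_X_pow, wt_ones]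
    · intro b _ hb
      have : wt b ≠ n := fun h => hb (wt_eq_n b h)
      rw [Polynomial.coeff_C_mul, Polynomial.coeff_X_pow, if_neg (fun h => this h.symm),
        mul_zero]
    · simp
  -- key: for ψ with ψ 0 ≠ 0 and tensorPow ψ n ∈ V, t := ψ 1 / ψ 0 satisfies q.eval t = 0
  have hroot : ∀ ψ : ZMod 2 → ℂ, ψ 0 ≠ 0 → tensorPow ψ n ∈ V →
      q.eval (ψ 1 / ψ 0) = 0 := by
    intro ψ hψ0 hmem
    have hdc : tensorPow ψ n = (ψ 0) ^ n • tensorPow (qubit 1 (ψ 1 / ψ 0)) n := by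
      conv_lhs => rw [qubit_eq ψ, qubit_smul _ _ hψ0, tensorPow_smul]
    have hpow : (ψ 0) ^ n ≠ 0 := pow_ne_zero _ hψ0
    have : tensorPow (qubit 1 (ψ 1 / ψ 0)) n ∈ V := by
      have := V.smul_mem ((ψ 0) ^ n)⁻¹ hmem
      rwa [hdc, smul_smul, inv_mul_cancel₀ hpow, one_smul] at this
    rw [heval]
    exact hfV _ this
  have hspan0 : ∀ ψ : ZMod 2 → ℂ, ψ ≠ 0 → ψ 0 = 0 →
      Submodule.span ℂ {ψ} = Submodule.span ℂ {qubit 0 1} ∧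
      (tensorPow ψ n ∈ V → f (delta (fun _ => 1 : F2 n)) = 0) := by
    intro ψ hψ h0
    have hψ1 : ψ 1 ≠ 0 := by
      intro h1
      apply hψ
      funext x; rcases zmod2_cases x with h | h <;> simp [h, h0, h1]
    have hdec : ψ = ψ 1 • qubit 0 1 := by
      funext x; rcases zmod2_cases x with h | h <;> simp [h, h0, qubit]
    constructor
    · rw [hdec]
      exact Submodule.span_singleton_smul_eq (IsUnit.mk0 _ hψ1) _
    · intro hmem
      have : tensorPow (qubit 0 1) n ∈ V := by
        have hdc : tensorPow ψ n = (ψ 1) ^ n • tensorPow (qubit 0 1) n := by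
          conv_lhs => rw [hdec, tensorPow_smul]
        have hpow : (ψ 1) ^ n ≠ 0 := pow_ne_zero _ hψ1
        have := V.smul_mem ((ψ 1) ^ n)⁻¹ hmem
        rwa [hdc, smul_smul, inv_mul_cancel₀ hpow, one_smul] at this
      rw [← tensorPow_qubit01 n]
      exact hfV _ this
  have hspan1 : ∀ ψ : ZMod 2 → ℂ, ψ 0 ≠ 0 →
      Submodule.span ℂ {ψ} = Submodule.span ℂ {qubit 1 (ψ 1 / ψ 0)} := by
    intro ψ h0
    conv_lhs => rw [qubit_eq ψ, qubit_smul _ _ h0]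
    exact Submodule.span_singleton_smul_eq (IsUnit.mk0 _ h0) _
  by_cases hc : q.coeff n = 0
  · -- then ψ₀ 0 ≠ 0, so q ≠ 0, natDegree ≤ n - 1
    have hψ00 : ψ₀ 0 ≠ 0 := by
      intro h0
      rcases eq_or_ne ψ₀ 0 with rfl | hψ0ne
      · exact h₀ (by simpa [tensorPow_smul, zero_smul] using
          (by rw [show (0 : ZMod 2 → ℂ) = (0:ℂ) • (0 : ZMod 2 → ℂ) by simp,
              tensorPow_smul, zero_pow (by omega : n ≠ 0), zero_smul]; exact V.zero_mem :
              tensorPow ((0:ℂ) • (0 : ZMod 2 → ℂ)) n ∈ V))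
      · have hψ1 : ψ₀ 1 ≠ 0 := by
          intro h1; apply hψ0ne
          funext x; rcases zmod2_cases x with h | h <;> simp [h, h0, h1]
        have hdec : ψ₀ = ψ₀ 1 • qubit 0 1 := by
          funext x; rcases zmod2_cases x with h | h <;> simp [h, h0, qubit]
        apply hf0
        rw [hdec, tensorPow_smul, map_smul, tensorPow_qubit01, smul_eq_mul, ← hcoeff, hc,
          mul_zero]
    have hqne : q ≠ 0 := by
      intro hq0
      apply hf0
      have hdc : tensorPow ψ₀ n = (ψ₀ 0) ^ n • tensorPow (qubit 1 (ψ₀ 1 / ψ₀ 0)) n := by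
        conv_lhs => rw [qubit_eq ψ₀, qubit_smul _ _ hψ00, tensorPow_smul]
      rw [hdc, map_smul, ← heval, hq0, smul_eq_mul]
      simp
    have hdeg' : q.natDegree ≤ n - 1 := by
      have hne : q.natDegree ≠ n := by
        intro h
        apply Polynomial.leadingCoeff_ne_zero.mpr hqne
        rw [Polynomial.leadingCoeff, h, hc]
      omega
    refine ⟨(q.roots.toFinset.image (fun t => Submodule.span ℂ {qubit 1 t})) ∪
      {Submodule.span ℂ {qubit 0 1}}, ?_, ?_⟩
    · calc _ ≤ _ := Finset.card_union_le _ _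
        _ ≤ q.roots.toFinset.card + 1 := by
            have h1 := Finset.card_image_le (s := q.roots.toFinset)
              (f := fun t => Submodule.span ℂ {qubit 1 t})
            have h2 : ({Submodule.span ℂ {qubit 0 1}} : Finset (Submodule ℂ (ZMod 2 → ℂ))).card = 1 :=
              Finset.card_singleton _
            omega
        _ ≤ q.natDegree + 1 := by
            have := q.roots.toFinset_card_le
            have := q.card_roots'
            omega
        _ ≤ n := by omega
    · intro ψ hψ hmem
      by_cases h0 : ψ 0 = 0
      · rw [(hspan0 ψ hψ h0).1]
        simp
      · rw [hspan1 ψ h0]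
        apply Finset.mem_union_left
        apply Finset.mem_image_of_mem
        rw [Multiset.mem_toFinset, Polynomial.mem_roots hqne]
        exact hroot ψ h0 hmem
  · -- coeff n ≠ 0 : q ≠ 0, no ψ with ψ 0 = 0 can occur
    have hqne : q ≠ 0 := fun h => hc (by rw [h]; simp)
    refine ⟨q.roots.toFinset.image (fun t => Submodule.span ℂ {qubit 1 t}), ?_, ?_⟩
    · calc _ ≤ q.roots.toFinset.card := Finset.card_image_le
        _ ≤ q.natDegree := by
            have := q.roots.toFinset_card_le
            have := q.card_roots'
            omega
        _ ≤ n := hdeg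
    · intro ψ hψ hmem
      by_cases h0 : ψ 0 = 0
      · exact absurd (hcoeff ▸ (hspan0 ψ hψ h0).2 hmem) hc
      · rw [hspan1 ψ h0]
        apply Finset.mem_image_of_mem
        rw [Multiset.mem_toFinset, Polynomial.mem_roots hqne]
        exact hroot ψ h0 hmem



theorem count_generic (n : ℕ) (hn : 1 ≤ n) (P : (F2 n → ℂ) → Prop)
    (hδ : ∀ x, P (delta x)) (hfin : {σ : F2 n → ℂ | P σ}.Finite) :
    ({L : Submodule ℂ (ZMod 2 → ℂ) | ∃ ψ : ZMod 2 → ℂ, ψ ≠ 0 ∧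
        L = Submodule.span ℂ {ψ} ∧ pRank P (tensorPow ψ n) <
          sSup {r : ℕ | ∃ ψ : ZMod 2 → ℂ, ψ ≠ 0 ∧ pRank P (tensorPow ψ n) = r}}.ncard
      ≤ n * Nat.choose
          ({L : Submodule ℂ (F2 n → ℂ) | ∃ σ, P σ ∧ L = Submodule.span ℂ {σ}}.ncard)
          (sSup {r : ℕ | ∃ ψ : ZMod 2 → ℂ, ψ ≠ 0 ∧ pRank P (tensorPow ψ n) = r} - 1)) := by
  classical
  set R : Set ℕ := {r : ℕ | ∃ ψ : ZMod 2 → ℂ, ψ ≠ 0 ∧ pRank P (tensorPow ψ n) = r} with hR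
  set g : ℕ := sSup R with hg
  set N : ℕ := Fintype.card (F2 n) with hN
  have hbdd : ∀ r ∈ R, r ≤ N := by
    rintro r ⟨ψ, hψ, rfl⟩
    exact pRank_le_card P hδ _
  set Bad : Set (Submodule ℂ (ZMod 2 → ℂ)) :=
    {L | ∃ ψ : ZMod 2 → ℂ, ψ ≠ 0 ∧ L = Submodule.span ℂ {ψ} ∧
      pRank P (tensorPow ψ n) < g} with hBad
  rcases Nat.eq_zero_or_pos g with hg0 | hg1
  · have : Bad = ∅ := by
      ext L
      simp only [hBad, Set.mem_setOf_eq, Set.mem_empty_iff_false, iff_false]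
      rintro ⟨ψ, hψ, rfl, hlt⟩
      omega
    rw [this]
    simp
  · have hRne : R.Nonempty := by
      by_contra h
      rw [Set.not_nonempty_iff_eq_empty] at h
      rw [hg, h] at hg1
      simp at hg1
    have hRbdd : BddAbove R := ⟨N, fun r hr => hbdd r hr⟩
    have hgR : g ∈ R := Nat.sSup_mem hRne hRbdd
    obtain ⟨ψ₀, hψ₀ne, hψ₀g⟩ := hgR
    have hgN : g ≤ N := hbdd g ⟨ψ₀, hψ₀ne, hψ₀g⟩
    set SL : Set (Submodule ℂ (F2 n → ℂ)) :=
      {L | ∃ σ, P σ ∧ L = Submodule.span ℂ {σ}} with hSL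
    have hSLfin : SL.Finite := by
      have : SL ⊆ (fun σ => Submodule.span ℂ {σ}) '' {σ : F2 n → ℂ | P σ} := by
        rintro L ⟨σ, hσ, rfl⟩
        exact ⟨σ, hσ, rfl⟩
      exact (hfin.image _).subset this
    set S : Finset (Submodule ℂ (F2 n → ℂ)) := hSLfin.toFinset with hS
    -- injectivity of x ↦ span {delta x}
    have hinj : ∀ x y : F2 n, Submodule.span ℂ {delta x} = Submodule.span ℂ {delta y} → x = y := by
      intro x y h
      have hx : delta x ∈ Submodule.span ℂ {delta y} := by
        rw [← h]; exact Submodule.mem_span_singleton_self _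
      obtain ⟨c, hc⟩ := Submodule.mem_span_singleton.mp hx
      by_contra hxy
      have := congrFun hc x
      simp [delta, hxy, fun h : x = y => hxy h] at this
    have hNS : N ≤ S.card := by
      have := Finset.card_le_card_of_injOn (f := fun x : F2 n => Submodule.span ℂ {delta x})
        (s := Finset.univ) (t := S)
        (fun x _ => by
          rw [hS, Finset.mem_coe, Set.Finite.mem_toFinset]
          exact ⟨delta x, hδ x, rfl⟩)
        (fun x _ y _ h => hinj x y h)
      rwa [Finset.card_univ] at this
    set k : ℕ := g - 1 with hk
    have hkS : k ≤ S.card := by omega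
    -- representative choice
    set rep : Submodule ℂ (F2 n → ℂ) → (F2 n → ℂ) := fun L =>
      if h : ∃ σ, P σ ∧ L = Submodule.span ℂ {σ} then h.choose else 0 with hrepdef
    have hrep : ∀ L ∈ S, P (rep L) ∧ Submodule.span ℂ {rep L} = L := by
      intro L hL
      rw [hS, Set.Finite.mem_toFinset] at hL
      have hrw : rep L = hL.choose := by rw [hrepdef]; exact dif_pos hL
      rw [hrw]
      exact ⟨hL.choose_spec.1, hL.choose_spec.2.symm⟩
    set VT : Finset (Submodule ℂ (F2 n → ℂ)) → Submodule ℂ (F2 n → ℂ) := fun T =>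
      Submodule.span ℂ ((T.image rep : Finset (F2 n → ℂ)) : Set (F2 n → ℂ)) with hVTdef
    have hVT_not : ∀ T, T ⊆ S → T.card = k → tensorPow ψ₀ n ∉ VT T := by
      intro T hTS hTk hmem
      have hle : pRank P (tensorPow ψ₀ n) ≤ (T.image rep).card := by
        refine pRank_le_of_mem_span P _ _ ?_ hmem
        intro σ hσ
        obtain ⟨L, hL, rfl⟩ := Finset.mem_image.mp hσ
        exact (hrep L (hTS hL)).1
      have hcard : (T.image rep).card ≤ k := Finset.card_image_le.trans (le_of_eq hTk)
      omega
    set Bf : Finset (Submodule ℂ (F2 n → ℂ)) → Finset (Submodule ℂ (ZMod 2 → ℂ)) := fun T =>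
      if h : tensorPow ψ₀ n ∉ VT T then (poly_count hn (VT T) ψ₀ h).choose else ∅ with hBfdef
    have hBf : ∀ T, T ⊆ S → T.card = k → (Bf T).card ≤ n ∧
        ∀ ψ : ZMod 2 → ℂ, ψ ≠ 0 → tensorPow ψ n ∈ VT T → Submodule.span ℂ {ψ} ∈ Bf T := by
      intro T hTS hTk
      have h := hVT_not T hTS hTk
      have hrw : Bf T = (poly_count hn (VT T) ψ₀ h).choose := by
        rw [hBfdef]; exact dif_pos h
      rw [hrw]
      exact (poly_count hn (VT T) ψ₀ h).choose_spec
    set 𝒯 := S.powersetCard k with h𝒯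
    have hcover : Bad ⊆ ↑(𝒯.biUnion Bf) := by
      rintro L ⟨ψ, hψ, rfl, hlt⟩
      have hle : pRank P (tensorPow ψ n) ≤ k := by omega
      obtain ⟨s, hsP, hscard, hspan⟩ := exists_span_of_pRank P hδ (tensorPow ψ n)
      set T₀ := s.image (fun σ => Submodule.span ℂ {σ}) with hT₀
      have hT₀S : T₀ ⊆ S := by
        intro L' hL'
        obtain ⟨σ, hσ, rfl⟩ := Finset.mem_image.mp hL'
        rw [hS, Set.Finite.mem_toFinset]
        exact ⟨σ, hsP σ hσ, rfl⟩
      have hT₀card : T₀.card ≤ k := Finset.card_image_le.trans (hscard.trans hle)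
      obtain ⟨T, hT₀T, hTS, hTk⟩ := Finset.exists_subsuperset_card_eq hT₀S hT₀card hkS
      have hsub : Submodule.span ℂ (s : Set (F2 n → ℂ)) ≤ VT T := by
        rw [Submodule.span_le]
        intro σ hσ
        have hσs : σ ∈ s := hσ
        have hL'T : Submodule.span ℂ {σ} ∈ T := hT₀T (Finset.mem_image_of_mem _ hσs)
        have hrepL := hrep _ (hTS hL'T)
        have h1 : σ ∈ Submodule.span ℂ {rep (Submodule.span ℂ {σ})} := by
          rw [hrepL.2]
          exact Submodule.mem_span_singleton_self _
        have h2 : Submodule.span ℂ {rep (Submodule.span ℂ {σ})} ≤ VT T := by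
          rw [hVTdef]
          apply Submodule.span_mono
          intro v hv
          rw [Set.mem_singleton_iff] at hv
          subst hv
          exact Finset.mem_coe.mpr (Finset.mem_image_of_mem _ hL'T)
        exact h2 h1
      have hmemV : tensorPow ψ n ∈ VT T := hsub hspan
      have hmemBf := (hBf T hTS hTk).2 ψ hψ hmemV
      rw [Finset.coe_biUnion]
      exact Set.mem_biUnion (by
        rw [h𝒯, Finset.mem_coe, Finset.mem_powersetCard]
        exact ⟨hTS, hTk⟩) hmemBf
    -- final count
    calc Bad.ncard ≤ (↑(𝒯.biUnion Bf) : Set (Submodule ℂ (ZMod 2 → ℂ))).ncard :=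
          Set.ncard_le_ncard hcover (Finset.finite_toSet _)
      _ = (𝒯.biUnion Bf).card := Set.ncard_coe_finset _
      _ ≤ ∑ T ∈ 𝒯, (Bf T).card := Finset.card_biUnion_le
      _ ≤ ∑ _T ∈ 𝒯, n := by
          refine Finset.sum_le_sum fun T hT => ?_
          rw [h𝒯, Finset.mem_powersetCard] at hT
          exact (hBf T hT.1 hT.2).1
      _ = 𝒯.card * n := by rw [Finset.sum_const, smul_eq_mul]
      _ = Nat.choose S.card k * n := by rw [h𝒯, Finset.card_powersetCard]
      _ = n * Nat.choose SL.ncard k := by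
          rw [mul_comm, hS, Set.ncard_eq_toFinset_card SL hSLfin]


lemma singleton_affine {n : ℕ} (x : F2 n) : IsAffineSubspace ({x} : Set (F2 n)) := by
  refine ⟨⟨x, rfl⟩, ?_⟩
  intro a ha b hb c hc
  rw [Set.mem_singleton_iff] at ha hb hc
  rw [ha, hb, hc]
  have hx : x + x + x = x := by
    funext i
    rcases zmod2_cases (x i) with h | h <;> simp [h] <;> decide
  rw [hx]
  exact Set.mem_singleton x

lemma delta_isStab {n : ℕ} (x : F2 n) : IsStabilizerState (delta x) := by
  refine ⟨{x}, 0, 0, singleton_affine x, fun _ _ => by simp, ⟨rfl, fun _ _ _ => by simp⟩, ?_⟩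
  intro y
  by_cases h : y = x <;> simp [delta, h]

lemma delta_isRealStab {n : ℕ} (x : F2 n) : IsRealStabilizerState (delta x) := by
  refine ⟨{x}, 0, singleton_affine x, ⟨rfl, fun _ _ _ => by simp⟩, ?_⟩
  intro y
  by_cases h : y = x <;> simp [delta, h]

lemma stab_finite {n : ℕ} : {σ : F2 n → ℂ | IsStabilizerState σ}.Finite := by
  have hsub : {σ : F2 n → ℂ | IsStabilizerState σ} ⊆ Set.range
      (fun p : Set (F2 n) × (F2 n → ZMod 2) × (F2 n → ZMod 2) =>
        (fun x => if x ∈ p.1 then Complex.I ^ (p.2.1 x).val * (-1 : ℂ) ^ (p.2.2 x).val else 0 :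
          F2 n → ℂ)) := by
    rintro σ ⟨A, l, q, _, _, _, hσ⟩
    exact ⟨(A, l, q), by funext x; exact (hσ x).symm⟩
  exact (Set.finite_range _).subset hsub

lemma realStab_finite {n : ℕ} : {σ : F2 n → ℂ | IsRealStabilizerState σ}.Finite := by
  have hsub : {σ : F2 n → ℂ | IsRealStabilizerState σ} ⊆ Set.range
      (fun p : Set (F2 n) × (F2 n → ZMod 2) =>
        (fun x => if x ∈ p.1 then (-1 : ℂ) ^ (p.2 x).val else 0 : F2 n → ℂ)) := by
    rintro σ ⟨A, q, _, _, hσ⟩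
    exact ⟨(A, q), by funext x; exact (hσ x).symm⟩
  exact (Set.finite_range _).subset hsub


/-- The number of lines `ℂ·ψ` in `ℂ²` with `χ(ψ^{⊗n}) < χ_n` is at most
`n·C(S_n, χ_n − 1)`, where `S_n` is the number of projective stabilizer states;
likewise for the real stabilizer rank. -/
theorem subgeneric_states_count (n : ℕ) (hn : 1 ≤ n) :
    ({L : Submodule ℂ (ZMod 2 → ℂ) | ∃ ψ : ZMod 2 → ℂ, ψ ≠ 0 ∧
        L = Submodule.span ℂ {ψ} ∧ stabRank (tensorPow ψ n) < genStabRank n}.ncard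
      ≤ n * Nat.choose (stabLines n).ncard (genStabRank n - 1)) ∧
    ({L : Submodule ℂ (ZMod 2 → ℂ) | ∃ ψ : ZMod 2 → ℂ, ψ ≠ 0 ∧
        L = Submodule.span ℂ {ψ} ∧ realStabRank (tensorPow ψ n) < genRealStabRank n}.ncard
      ≤ n * Nat.choose (realStabLines n).ncard (genRealStabRank n - 1)) := by
  exact ⟨count_generic n hn IsStabilizerState delta_isStab stab_finite,
    count_generic n hn IsRealStabilizerState delta_isRealStab realStab_finite⟩

end StabPaper
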